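/- Let ω₁, ω₂, η₁, η₂ ∈ ℂ with ω₁ ≠ 0, set τ = ω₂/ω₁, assume Im τ ≠ 0, and assume the Legendre relation ω₁η₂ − η₁ω₂ = 2πi. Set λ = ω₁/(2πi) and G* = −ω₁η₁/(2·(2πi)²) + 1/(8π·Im τ). Let P be the 2×2 complex matrix with first row (ω₁, η₁) and second row (ω₂, η₂), and let P̄ denote its entrywise complex conjugate. Then P̄ is invertible, and P̄⁻¹·P equals the 2×2 matrix whose (1,1) entry is −(λ/λ̄)·8π·(Im τ)·conj(G*), whose (1,2) entry is (λλ̄)⁻¹·(4π·Im τ)⁻¹·((8π·Im τ)²·G*·conj(G*) − 1), whose (2,1) entry is −λλ̄·4π·Im τ, and whose (2,2) entry is (λ̄/λ)·8π·(Im τ)·G*, where λ̄ and conj(G*) denote complex conjugates. -/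

import Mathlib

open Complex Matrix

set_option maxHeartbeats 1600000 in
/-- The single-valued period matrix `P̄⁻¹·P` of an elliptic curve with period matrix
`P = !![ω₁, η₁; ω₂, η₂]` (rows: Betti homology basis, columns: forms of the first and second
kind), in terms of `τ = ω₂/ω₁`, `λ = ω₁/(2πi)` and the completed Eisenstein series
`𝔾₂* = −ω₁η₁/(2(2πi)²) + 1/(8π·Im τ)`. -/
theorem singleValued_period_matrix_elliptic
    (ω₁ ω₂ η₁ η₂ τ lam Gs : ℂ)
    (hω : ω₁ ≠ 0) (hτ : τ = ω₂ / ω₁) (him : τ.im ≠ 0)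
    (hleg : ω₁ * η₂ - η₁ * ω₂ = 2 * (Real.pi : ℂ) * Complex.I)
    (hlam : lam = ω₁ / (2 * (Real.pi : ℂ) * Complex.I))
    (hGs : Gs = -(ω₁ * η₁) / (2 * (2 * (Real.pi : ℂ) * Complex.I) ^ 2) +
      ((1 / (8 * Real.pi * τ.im) : ℝ) : ℂ)) :
    IsUnit ((!![ω₁, η₁; ω₂, η₂]).map (starRingEnd ℂ)).det ∧
    ((!![ω₁, η₁; ω₂, η₂]).map (starRingEnd ℂ))⁻¹ * !![ω₁, η₁; ω₂, η₂] =
      !![-(lam / starRingEnd ℂ lam) * ((8 * Real.pi * τ.im : ℝ) : ℂ) * starRingEnd ℂ Gs,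
          (lam * starRingEnd ℂ lam)⁻¹ * (((4 * Real.pi * τ.im : ℝ) : ℂ))⁻¹ *
            (((8 * Real.pi * τ.im : ℝ) : ℂ) ^ 2 * Gs * starRingEnd ℂ Gs - 1);
         -(lam * starRingEnd ℂ lam) * ((4 * Real.pi * τ.im : ℝ) : ℂ),
          (starRingEnd ℂ lam / lam) * ((8 * Real.pi * τ.im : ℝ) : ℂ) * Gs] := by
  have hπ : (Real.pi : ℂ) ≠ 0 := by exact_mod_cast Real.pi_ne_zero
  have ht : ((τ.im : ℝ) : ℂ) ≠ 0 := by exact_mod_cast him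
  have hω' : starRingEnd ℂ ω₁ ≠ 0 := by
    simpa using (map_ne_zero (starRingEnd ℂ)).mpr hω
  have hkne : (2 * (Real.pi : ℂ) * Complex.I) ≠ 0 := by
    simp [hπ, Complex.I_ne_zero]
  have hc : starRingEnd ℂ (2 * (Real.pi : ℂ) * Complex.I)
      = -(2 * (Real.pi : ℂ) * Complex.I) := by
    simp only [_root_.map_mul, Complex.conj_I, Complex.conj_ofReal, map_ofNat]
    ring
  have hω₂ : ω₂ = τ * ω₁ := by rw [hτ]; field_simp
  have hω₂' : starRingEnd ℂ ω₂ = starRingEnd ℂ τ * starRingEnd ℂ ω₁ := by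
    rw [hω₂]; exact _root_.map_mul _ _ _
  have hτ' : starRingEnd ℂ τ = τ - 2 * ((τ.im : ℝ) : ℂ) * Complex.I := by
    have := Complex.sub_conj τ
    push_cast at this
    linear_combination -this
  have hη₂ : η₂ = (2 * (Real.pi : ℂ) * Complex.I + η₁ * (τ * ω₁)) / ω₁ := by
    rw [← hω₂]
    field_simp
    linear_combination hleg
  have hη₂' : starRingEnd ℂ η₂ =
      (-(2 * (Real.pi : ℂ) * Complex.I) + starRingEnd ℂ η₁ *
        (starRingEnd ℂ τ * starRingEnd ℂ ω₁)) / starRingEnd ℂ ω₁ := by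
    rw [hη₂, map_div₀, map_add]
    simp only [_root_.map_mul, Complex.conj_I, Complex.conj_ofReal, map_ofNat]
    ring
  have hGs2 : Gs = ω₁ * η₁ / (8 * (Real.pi : ℂ) ^ 2) +
      1 / (8 * (Real.pi : ℂ) * ((τ.im : ℝ) : ℂ)) := by
    rw [hGs]
    have h8 : (2 * (2 * (Real.pi : ℂ) * Complex.I) ^ 2) = -(8 * (Real.pi : ℂ) ^ 2) := by
      linear_combination 8 * (Real.pi : ℂ) ^ 2 * Complex.I_sq
    rw [h8]
    push_cast
    field_simp
  have hGs' : starRingEnd ℂ Gs = starRingEnd ℂ ω₁ * starRingEnd ℂ η₁ / (8 * (Real.pi : ℂ) ^ 2) +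
      1 / (8 * (Real.pi : ℂ) * ((τ.im : ℝ) : ℂ)) := by
    rw [hGs2]
    simp [map_add, map_div₀, _root_.map_mul, map_pow, map_ofNat, Complex.conj_ofReal]
  have hlam1 : lam / starRingEnd ℂ lam = -(ω₁ / starRingEnd ℂ ω₁) := by
    rw [hlam, map_div₀, hc]
    field_simp
  have hlam2 : lam * starRingEnd ℂ lam = ω₁ * starRingEnd ℂ ω₁ / (4 * (Real.pi : ℂ) ^ 2) := by
    rw [hlam, map_div₀, hc]
    field_simp
    linear_combination (-4 : ℂ) * Complex.I_sq
  have hlam3 : starRingEnd ℂ lam / lam = -(starRingEnd ℂ ω₁ / ω₁) := by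
    rw [hlam, map_div₀, hc]
    field_simp
  have h8Gs : 8 * (Real.pi : ℂ) * ((τ.im : ℝ) : ℂ) * Gs =
      ω₁ * η₁ * ((τ.im : ℝ) : ℂ) / (Real.pi : ℂ) + 1 := by
    rw [hGs2]
    field_simp
  have h8Gs' : 8 * (Real.pi : ℂ) * ((τ.im : ℝ) : ℂ) * starRingEnd ℂ Gs =
      starRingEnd ℂ ω₁ * starRingEnd ℂ η₁ * ((τ.im : ℝ) : ℂ) / (Real.pi : ℂ) + 1 := by
    rw [hGs']
    field_simp
  have hGsq : (8 * (Real.pi : ℂ) * ((τ.im : ℝ) : ℂ)) ^ 2 * Gs * starRingEnd ℂ Gs =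
      (ω₁ * η₁ * ((τ.im : ℝ) : ℂ) / (Real.pi : ℂ) + 1) *
        (starRingEnd ℂ ω₁ * starRingEnd ℂ η₁ * ((τ.im : ℝ) : ℂ) / (Real.pi : ℂ) + 1) := by
    calc (8 * (Real.pi : ℂ) * ((τ.im : ℝ) : ℂ)) ^ 2 * Gs * starRingEnd ℂ Gs
        = (8 * (Real.pi : ℂ) * ((τ.im : ℝ) : ℂ) * Gs) *
          (8 * (Real.pi : ℂ) * ((τ.im : ℝ) : ℂ) * starRingEnd ℂ Gs) := by ring
      _ = _ := by rw [h8Gs, h8Gs']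
  have hmap : (!![ω₁, η₁; ω₂, η₂]).map (starRingEnd ℂ) =
      !![starRingEnd ℂ ω₁, starRingEnd ℂ η₁; starRingEnd ℂ ω₂, starRingEnd ℂ η₂] := by
    ext i j
    fin_cases i <;> fin_cases j <;> simp [Matrix.map_apply]
  have hdet : ((!![ω₁, η₁; ω₂, η₂]).map (starRingEnd ℂ)).det
      = -(2 * (Real.pi : ℂ) * Complex.I) := by
    rw [hmap, Matrix.det_fin_two_of]
    have hlegc := congrArg (starRingEnd ℂ) hleg
    simp only [map_sub, _root_.map_mul, Complex.conj_I, Complex.conj_ofReal,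
      map_ofNat] at hlegc
    linear_combination hlegc
  have hu : IsUnit ((!![ω₁, η₁; ω₂, η₂]).map (starRingEnd ℂ)).det := by
    rw [hdet]
    refine isUnit_iff_ne_zero.mpr ?_
    simpa using hkne
  refine ⟨hu, ?_⟩
  have key : (!![ω₁, η₁; ω₂, η₂]).map (starRingEnd ℂ) *
      !![-(lam / starRingEnd ℂ lam) * ((8 * Real.pi * τ.im : ℝ) : ℂ) * starRingEnd ℂ Gs,
          (lam * starRingEnd ℂ lam)⁻¹ * (((4 * Real.pi * τ.im : ℝ) : ℂ))⁻¹ *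
            (((8 * Real.pi * τ.im : ℝ) : ℂ) ^ 2 * Gs * starRingEnd ℂ Gs - 1);
         -(lam * starRingEnd ℂ lam) * ((4 * Real.pi * τ.im : ℝ) : ℂ),
          (starRingEnd ℂ lam / lam) * ((8 * Real.pi * τ.im : ℝ) : ℂ) * Gs]
      = !![ω₁, η₁; ω₂, η₂] := by
    rw [hmap]
    push_cast
    rw [hlam1, hlam2, hlam3, hω₂', hη₂', hGsq, hGs', hω₂, hη₂, hGs2, hτ']
    ext i j
    fin_cases i <;> fin_cases j <;>
      · simp [Matrix.mul_apply, Fin.sum_univ_two]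
        field_simp
        first
          | (rw [div_add_div _ _ (by simp [hω, hω', hπ, ht]) (by simp [hω, hω', hπ, ht]),
               div_eq_iff (by simp [hω, hω', hπ, ht])]
             ring)
          | (rw [div_add' _ _ _ (by simp [hω, hω', hπ, ht]),
               div_eq_iff (by simp [hω, hω', hπ, ht])]
             ring)
          | (rw [div_add_div _ _ (by simp [hω, hω', hπ, ht]) (by simp [hω, hω', hπ, ht]),
               div_mul_eq_mul_div, div_eq_iff (by simp [hω, hω', hπ, ht])]
             ring)
          | ring
  calc ((!![ω₁, η₁; ω₂, η₂]).map (starRingEnd ℂ))⁻¹ * !![ω₁, η₁; ω₂, η₂]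
      = ((!![ω₁, η₁; ω₂, η₂]).map (starRingEnd ℂ))⁻¹ *
        ((!![ω₁, η₁; ω₂, η₂]).map (starRingEnd ℂ) * _) := by rw [key]
    _ = _ := by
        rw [← Matrix.mul_assoc, Matrix.nonsing_inv_mul _ hu, Matrix.one_mul]
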